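/- Let q be an odd squarefree positive integer, α an integer, and K an integer with 0 ≤ K < q. Then Σ_{k=0}^{K} e((k² + αk)/q) ≠ 0. -/

import Mathlib

set_option maxHeartbeats 1000000
open Complex Polynomial IntermediateField

noncomputable def e (x : ℝ) : ℂ := Complex.exp (2 * Real.pi * Complex.I * x)

lemma e_add (x y : ℝ) : e (x + y) = e x * e y := by
  rw [e, e, e, ← Complex.exp_add]; push_cast; ring_nf

lemma e_zpow (a : ℤ) (x : ℝ) : e (a * x) = e x ^ a := by
  rw [e, e, ← Complex.exp_int_mul]; push_cast; ring_nf

lemma e_one : e 1 = 1 := by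
  rw [e]; push_cast; rw [mul_one]; exact Complex.exp_two_pi_mul_I

lemma e_int (a : ℤ) : e a = 1 := by
  have : e ((a : ℝ)) = e (a * 1) := by norm_num
  rw [this, e_zpow, e_one, one_zpow]

lemma e_prim (n : ℕ) (hn : n ≠ 0) : IsPrimitiveRoot (e (1 / (n:ℝ))) n := by
  have := Complex.isPrimitiveRoot_exp n hn
  convert this using 2
  rw [e]; push_cast; ring_nf

/-- `e (a/n)` as a natural power of `e (1/n)` via the `ZMod n` value. -/
lemma e_div_eq_pow_val (n : ℕ) (hn : n ≠ 0) (a : ℤ) :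
    e ((a:ℝ) / (n:ℝ)) = e (1 / (n:ℝ)) ^ ((a : ZMod n).val) := by
  haveI : NeZero n := ⟨hn⟩
  set v : ℕ := ((a : ZMod n)).val with hv
  have hdvd : (n:ℤ) ∣ a - (v:ℤ) := by
    rw [← ZMod.intCast_zmod_eq_zero_iff_dvd]
    push_cast
    rw [hv, ZMod.natCast_val, ZMod.cast_id, sub_self]
  obtain ⟨t, ht⟩ := hdvd
  have ha : a = (v:ℤ) + n * t := by omega
  have hn0 : (n:ℝ) ≠ 0 := Nat.cast_ne_zero.2 hn
  have hsplit : (a:ℝ)/(n:ℝ) = ((v:ℤ):ℝ) * (1/(n:ℝ)) + ((t:ℤ):ℝ) := by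
    rw [ha]; push_cast; field_simp
  rw [hsplit, e_add, e_int, mul_one, e_zpow, zpow_natCast]

lemma isIntegral_root (F : Type*) [Field F] [Algebra F ℂ] {ζ : ℂ} {n : ℕ}
    (hn : n ≠ 0) (h : ζ ^ n = 1) : IsIntegral F ζ := by
  refine ⟨X ^ n - 1, monic_X_pow_sub_C _ hn, ?_⟩
  rw [eval₂_sub, eval₂_pow, eval₂_X, eval₂_one, h, sub_self]

lemma finrank_adjoin {n : ℕ} (hn : 0 < n) {ζ : ℂ} (hζ : IsPrimitiveRoot ζ n) :
    Module.finrank ℚ ↥(ℚ⟮ζ⟯ : IntermediateField ℚ ℂ) = n.totient := by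
  rw [IntermediateField.adjoin.finrank (isIntegral_root ℚ hn.ne' hζ.pow_eq_one),
    ← Polynomial.cyclotomic_eq_minpoly_rat hζ hn, natDegree_cyclotomic]

lemma lemDeg (p m' : ℕ) (hp : p.Prime) (hm' : 0 < m') (hcop : Nat.Coprime p m')
    {ζp ζm : ℂ} (hζp : IsPrimitiveRoot ζp p) (hζm : IsPrimitiveRoot ζm m') :
    (minpoly (ℚ⟮ζm⟯ : IntermediateField ℚ ℂ) ζp).natDegree = p - 1 := by
  haveI : Fact p.Prime := ⟨hp⟩
  set K : IntermediateField ℚ ℂ := ℚ⟮ζm⟯ with hK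
  have hintm : IsIntegral ℚ ζm := isIntegral_root ℚ hm'.ne' hζm.pow_eq_one
  have hintp : IsIntegral ↥K ζp := isIntegral_root ↥K hp.ne_zero hζp.pow_eq_one
  have hdvd : minpoly ↥K ζp ∣ cyclotomic p ↥K := by
    apply minpoly.dvd
    have : Polynomial.aeval ζp (cyclotomic p ↥K) = Polynomial.eval ζp (cyclotomic p ℂ) := by
      rw [← map_cyclotomic p (algebraMap ↥K ℂ), aeval_def, eval_map]
    rw [this]
    exact hζp.isRoot_cyclotomic hp.pos
  have hdegle : (minpoly ↥K ζp).natDegree ≤ p - 1 := by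
    have := Polynomial.natDegree_le_of_dvd hdvd (cyclotomic_ne_zero p ↥K)
    rwa [natDegree_cyclotomic, Nat.totient_prime hp] at this
  haveI hfdK : FiniteDimensional ℚ ↥K := IntermediateField.adjoin.finiteDimensional hintm
  set T : IntermediateField ↥K ℂ := IntermediateField.adjoin ↥K {ζp} with hT
  haveI hfdT : FiniteDimensional ↥K ↥T := IntermediateField.adjoin.finiteDimensional hintp
  haveI hfdQT : FiniteDimensional ℚ ↥T := Module.Finite.trans ↥K ↥T
  have hTfin : Module.finrank ↥K ↥T = (minpoly ↥K ζp).natDegree :=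
    IntermediateField.adjoin.finrank hintp
  have hKfin : Module.finrank ℚ ↥K = m'.totient := finrank_adjoin hm' hζm
  have hmul : IsPrimitiveRoot (ζp * ζm) (p * m') := by
    have hcomm : Commute ζp ζm := Commute.all _ _
    have := hcomm.orderOf_mul_eq_mul_orderOf_of_coprime
      (by rw [← hζp.eq_orderOf, ← hζm.eq_orderOf]; exact hcop)
    rw [← hζp.eq_orderOf, ← hζm.eq_orderOf] at this
    have h0 := IsPrimitiveRoot.orderOf (ζp * ζm)
    rwa [this] at h0
  set M : IntermediateField ℚ ℂ := ℚ⟮ζp * ζm⟯ with hM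
  have hMfin : Module.finrank ℚ ↥M = (p * m').totient :=
    finrank_adjoin (Nat.mul_pos hp.pos hm') hmul
  have hMle : M ≤ T.restrictScalars ℚ := by
    rw [hM, IntermediateField.adjoin_simple_le_iff]
    show _ ∈ T
    refine mul_mem (IntermediateField.mem_adjoin_simple_self ↥K ζp) ?_
    have : ζm = algebraMap ↥K ℂ ⟨ζm, IntermediateField.mem_adjoin_simple_self ℚ ζm⟩ := rfl
    rw [this]
    exact T.algebraMap_mem _
  have hle : (p * m').totient ≤ Module.finrank ℚ ↥T := by
    rw [← hMfin]
    have hrfl : Module.finrank ℚ ↥(T.restrictScalars ℚ) = Module.finrank ℚ ↥T := rfl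
    rw [← hrfl]
    haveI : FiniteDimensional ℚ ↥(T.restrictScalars ℚ) := hfdQT
    exact LinearMap.finrank_le_finrank_of_injective
      (f := (IntermediateField.inclusion hMle).toLinearMap)
      ((IntermediateField.inclusion hMle).toRingHom.injective)
  have htower : Module.finrank ℚ ↥K * Module.finrank ↥K ↥T = Module.finrank ℚ ↥T :=
    Module.finrank_mul_finrank ℚ ↥K ↥T
  rw [← htower, hKfin, hTfin, Nat.totient_mul hcop, Nat.totient_prime hp] at hle
  have htpos : 0 < m'.totient := Nat.totient_pos.2 hm'
  refine le_antisymm hdegle ?_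
  rw [mul_comm] at hle
  exact Nat.le_of_mul_le_mul_left hle htpos

lemma lemA (p m' : ℕ) (hp : p.Prime) (hm' : 0 < m') {ζp ζm : ℂ}
    (hζp : IsPrimitiveRoot ζp p) (hζm : IsPrimitiveRoot ζm m')
    (c : ℕ → ℂ) (hc : ∀ i, c i ∈ (ℚ⟮ζm⟯ : IntermediateField ℚ ℂ))
    (hrel : ∑ i ∈ Finset.range p, ζp ^ i * c i = 0)
    (hdeg : (minpoly (ℚ⟮ζm⟯ : IntermediateField ℚ ℂ) ζp).natDegree = p - 1) :
    ∀ i < p, ∀ j < p, c i = c j := by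
  haveI : Fact p.Prime := ⟨hp⟩
  set K : IntermediateField ℚ ℂ := ℚ⟮ζm⟯ with hK
  have hintp : IsIntegral ↥K ζp := isIntegral_root ↥K hp.ne_zero hζp.pow_eq_one
  have hmono := minpoly.monic hintp
  have hdvd : minpoly ↥K ζp ∣ cyclotomic p ↥K := by
    apply minpoly.dvd
    have : Polynomial.aeval ζp (cyclotomic p ↥K) = Polynomial.eval ζp (cyclotomic p ℂ) := by
      rw [← map_cyclotomic p (algebraMap ↥K ℂ), aeval_def, eval_map]
    rw [this]
    exact hζp.isRoot_cyclotomic hp.pos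
  have hmin : minpoly ↥K ζp = cyclotomic p ↥K := by
    refine (eq_of_monic_of_dvd_of_natDegree_le hmono (cyclotomic.monic p ↥K) hdvd ?_).symm
    rw [natDegree_cyclotomic, Nat.totient_prime hp, hdeg]
  set P : Polynomial ↥K := ∑ i ∈ Finset.range p, Polynomial.C (⟨c i, hc i⟩ : ↥K) * X ^ i with hP
  have hcoeff : ∀ i < p, P.coeff i = ⟨c i, hc i⟩ := by
    intro i hi
    rw [hP, finset_sum_coeff]
    rw [Finset.sum_eq_single i]
    · simp
    · intro j _ hj
      simp [coeff_C_mul, coeff_X_pow, Ne.symm hj]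
    · intro h
      exact absurd (Finset.mem_range.2 hi) h
  have hdegP : P.natDegree ≤ p - 1 := by
    refine natDegree_sum_le_of_forall_le _ _ ?_
    intro i hi
    refine (natDegree_C_mul_X_pow_le _ _).trans ?_
    have := Finset.mem_range.1 hi
    omega
  have haeval : Polynomial.aeval ζp P = 0 := by
    rw [hP, map_sum, ← hrel]
    refine Finset.sum_congr rfl ?_
    intro i _
    rw [map_mul, map_pow, aeval_X, aeval_C]
    simp [mul_comm]
  have hdvdP : minpoly ↥K ζp ∣ P := minpoly.dvd _ _ haeval
  have hPeq : P = Polynomial.C P.leadingCoeff * minpoly ↥K ζp :=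
    eq_leadingCoeff_mul_of_monic_of_dvd_of_natDegree_le hmono hdvdP (hdegP.trans_eq hdeg.symm)
  have hcval : ∀ i < p, (⟨c i, hc i⟩ : ↥K) = P.leadingCoeff := by
    intro i hi
    rw [← hcoeff i hi]
    conv_lhs => rw [hPeq]
    rw [hmin, cyclotomic_prime, coeff_C_mul, finset_sum_coeff]
    rw [Finset.sum_eq_single i]
    · rw [coeff_X_pow, if_pos rfl, mul_one]
    · intro j _ hj
      simp [coeff_X_pow, Ne.symm hj]
    · intro h
      exact absurd (Finset.mem_range.2 hi) h
  intro i hi j hj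
  have := (hcval i hi).trans (hcval j hj).symm
  exact congrArg Subtype.val this

/-- Main induction: sums of `e (u (k²+αk) / m)` over any nonempty finite set are nonzero. -/
lemma key (m : ℕ) : 0 < m → Odd m → Squarefree m → ∀ u : ℤ, IsCoprime u (m:ℤ) →
    ∀ α : ℤ, ∀ E : Finset ℕ, E.Nonempty →
    ∑ k ∈ E, e (((u * ((k:ℤ)^2 + α * k) : ℤ) : ℝ) / (m:ℝ)) ≠ 0 := by
  induction m using Nat.strong_induction_on with
  | _ m IH =>
  intro hm hodd hsf u hu α E hE hS
  rcases eq_or_lt_of_le (Nat.one_le_iff_ne_zero.2 hm.ne') with h1 | h1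
  · -- base case m = 1
    rw [← h1] at hS
    simp only [Nat.cast_one, div_one, e_int] at hS
    rw [Finset.sum_const, nsmul_eq_mul, mul_one] at hS
    exact (Nat.cast_ne_zero.2 (Finset.card_ne_zero_of_mem hE.choose_spec)) hS
  -- inductive step
  set p := m.minFac with hpdef
  have hp : p.Prime := Nat.minFac_prime (by omega)
  haveI : Fact p.Prime := ⟨hp⟩
  haveI : NeZero p := ⟨hp.ne_zero⟩
  set m' := m / p with hm'def
  have hmeq : m = p * m' := (Nat.mul_div_cancel' m.minFac_dvd).symm
  have trip : p.Coprime m' ∧ Squarefree p ∧ Squarefree m' := by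
    rw [← Nat.squarefree_mul_iff, ← hmeq]; exact hsf
  have hcop : p.Coprime m' := trip.1
  have hsf' : Squarefree m' := trip.2.2
  have hoddm' : Odd m' := (Nat.odd_mul.1 (hmeq ▸ hodd)).2
  have hpodd : Odd p := (Nat.odd_mul.1 (hmeq ▸ hodd)).1
  have hm' : 0 < m' := Nat.pos_of_ne_zero (by intro h0; rw [h0, Nat.mul_zero] at hmeq; omega)
  have hm'lt : m' < m := by
    rw [hmeq]
    have := hp.two_le
    nlinarith [hm']
  -- Bezout
  obtain ⟨y, x, hxy⟩ : IsCoprime (p:ℤ) (m':ℤ) := Nat.isCoprime_iff_coprime.2 hcop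
  -- hxy : y * p + x * m' = 1
  have hp0R : (p:ℝ) ≠ 0 := Nat.cast_ne_zero.2 hp.ne_zero
  have hm'0R : (m':ℝ) ≠ 0 := Nat.cast_ne_zero.2 hm'.ne'
  have hxyR : (y:ℝ) * p + x * m' = 1 := by exact_mod_cast congrArg (Int.cast : ℤ → ℝ) hxy
  -- splitting of the exponent
  have hsplitR : ∀ g : ℤ, ((u * g : ℤ):ℝ)/(m:ℝ)
      = ((u * x * g : ℤ):ℝ)/(p:ℝ) + ((u * y * g : ℤ):ℝ)/(m':ℝ) := by
    intro g
    have hmR : (m:ℝ) = (p:ℝ) * (m':ℝ) := by exact_mod_cast congrArg Nat.cast hmeq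
    rw [hmR]
    push_cast
    field_simp
    have hZ : u * g = u * x * g * (m':ℤ) + u * y * g * (p:ℤ) := by linear_combination (-(u * g)) * hxy
    exact_mod_cast (by linear_combination (-(u * g)) * hxy : u * g = u * g * ((m':ℤ) * x + (p:ℤ) * y))
  -- fiber decomposition
  set f : ℕ → ZMod p := fun k => ((u * x * ((k:ℤ)^2 + α * k) : ℤ) : ZMod p) with hf
  set ζp : ℂ := e (1/(p:ℝ)) with hζpdef
  set B : ZMod p → ℂ := fun r => ∑ k ∈ E.filter (fun k => f k = r),
      e (((u * y * ((k:ℤ)^2 + α * k) : ℤ) : ℝ) / (m':ℝ)) with hB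
  have hterm : ∀ r : ZMod p, ∀ k ∈ E.filter (fun k => f k = r),
      e (((u * ((k:ℤ)^2 + α * k) : ℤ) : ℝ) / (m:ℝ))
        = ζp ^ (r.val) * e (((u * y * ((k:ℤ)^2 + α * k) : ℤ) : ℝ) / (m':ℝ)) := by
    intro r k hk
    obtain ⟨hkE, hfk⟩ := Finset.mem_filter.1 hk
    rw [hsplitR ((k:ℤ)^2 + α * k), e_add]
    congr 1
    rw [e_div_eq_pow_val p hp.ne_zero, hζpdef]
    have : ((u * x * ((k:ℤ)^2 + α * k) : ℤ) : ZMod p) = r := hfk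
    rw [this]
  have hfib : ∀ r : ZMod p, ∑ k ∈ E.filter (fun k => f k = r),
      e (((u * ((k:ℤ)^2 + α * k) : ℤ) : ℝ) / (m:ℝ)) = ζp ^ r.val * B r := by
    intro r
    rw [hB, Finset.mul_sum]
    exact Finset.sum_congr rfl (hterm r)
  have hrel0 : ∑ r : ZMod p, ζp ^ r.val * B r = 0 := by
    calc ∑ r : ZMod p, ζp ^ r.val * B r
        = ∑ r : ZMod p, ∑ k ∈ E.filter (fun k => f k = r),
            e (((u * ((k:ℤ)^2 + α * k) : ℤ) : ℝ) / (m:ℝ)) :=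
          Finset.sum_congr rfl (fun r _ => (hfib r).symm)
      _ = ∑ k ∈ E, e (((u * ((k:ℤ)^2 + α * k) : ℤ) : ℝ) / (m:ℝ)) :=
          Finset.sum_fiberwise E f _
      _ = 0 := hS
  have hrel : ∑ i ∈ Finset.range p, ζp ^ i * B ((i : ℕ) : ZMod p) = 0 := by
    rw [← hrel0]
    refine Finset.sum_nbij' (fun i => ((i : ℕ) : ZMod p)) (fun r => r.val) ?_ ?_ ?_ ?_ ?_
    · intro a _; exact Finset.mem_univ _
    · intro r _; exact Finset.mem_range.2 (ZMod.val_lt r)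
    · intro a ha; exact ZMod.val_cast_of_lt (Finset.mem_range.1 ha)
    · intro r _; exact ZMod.natCast_rightInverse r
    · intro a ha
      rw [ZMod.val_cast_of_lt (Finset.mem_range.1 ha)]
  have hprimp : IsPrimitiveRoot ζp p := e_prim p hp.ne_zero
  have hprimm : IsPrimitiveRoot (e (1/(m':ℝ))) m' := e_prim m' hm'.ne'
  have hcmem : ∀ i : ℕ, B ((i : ℕ) : ZMod p) ∈ (ℚ⟮e (1/(m':ℝ))⟯ : IntermediateField ℚ ℂ) := by
    intro i
    refine IntermediateField.sum_mem _ ?_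
    intro k _
    rw [e_div_eq_pow_val m' hm'.ne']
    exact pow_mem (IntermediateField.mem_adjoin_simple_self ℚ _) _
  have hall := lemA p m' hp hm' hprimp hprimm (fun i => B ((i : ℕ) : ZMod p)) hcmem hrel
    (lemDeg p m' hp hm' hcop hprimp hprimm)
  have hBeq : ∀ r s : ZMod p, B r = B s := by
    intro r s
    have := hall r.val (ZMod.val_lt r) s.val (ZMod.val_lt s)
    simpa only [ZMod.natCast_rightInverse r, ZMod.natCast_rightInverse s] using this
  -- 2 ≠ 0 mod p
  have h2ne : (2 : ZMod p) ≠ 0 := by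
    have hp2 : p ≠ 2 := by
      intro h
      rw [h] at hpodd
      exact (Nat.not_odd_iff_even.2 (even_two)) hpodd
    intro h
    have : ((2:ℕ) : ZMod p) = 0 := by exact_mod_cast h
    rw [ZMod.natCast_eq_zero_iff] at this
    rcases (Nat.prime_dvd_prime_iff_eq hp Nat.prime_two).1 this with h'
    exact hp2 h'
  -- the quadratic map is not surjective mod p
  have hnotsurj : ¬ Function.Surjective (fun z : ZMod p => z^2 + (α:ZMod p) * z) := by
    intro hsurj
    have hinj := Finite.injective_iff_surjective.2 hsurj
    set z0 : ZMod p := -(α : ZMod p) / 2 with hz0def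
    have hz0 : 2 * z0 = -(α:ZMod p) := by
      rw [hz0def]
      field_simp
    have heq : (fun z : ZMod p => z^2 + (α:ZMod p)*z) (z0+1)
        = (fun z : ZMod p => z^2 + (α:ZMod p)*z) (z0-1) := by
      simp only
      linear_combination (2:ZMod p) * hz0
    have h11 := hinj heq
    have : (2 : ZMod p) = 0 := by linear_combination h11
    exact h2ne this
  obtain ⟨r0', hr0'⟩ : ∃ b : ZMod p, ∀ z : ZMod p, z^2 + (α:ZMod p)*z ≠ b := by
    rw [Function.Surjective] at hnotsurj
    push_neg at hnotsurj
    exact hnotsurj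
  -- u and x are nonzero mod p
  have hpdvdm : (p:ℤ) ∣ (m:ℤ) := Int.natCast_dvd_natCast.2 m.minFac_dvd
  have hup : IsCoprime u (p:ℤ) := hu.of_isCoprime_of_dvd_right hpdvdm
  have hu0 : ((u : ℤ) : ZMod p) ≠ 0 := by
    intro h
    rw [ZMod.intCast_zmod_eq_zero_iff_dvd] at h
    have := hup.isUnit_of_dvd' h dvd_rfl
    rw [Int.isUnit_iff] at this
    have h2 := hp.two_le
    omega
  have hx0 : ((x : ℤ) : ZMod p) ≠ 0 := by
    have hcast := congrArg (fun z : ℤ => (z : ZMod p)) hxy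
    push_cast at hcast
    rw [ZMod.natCast_self, mul_zero, zero_add] at hcast
    exact left_ne_zero_of_mul_eq_one hcast
  -- the empty fiber
  set r0 : ZMod p := ((u:ℤ):ZMod p) * ((x:ℤ):ZMod p) * r0' with hr0def
  have hempty : E.filter (fun k => f k = r0) = ∅ := by
    rw [Finset.filter_eq_empty_iff]
    intro k _ hfk
    have hpush : f k = ((u:ℤ):ZMod p) * ((x:ℤ):ZMod p)
        * (((k:ℕ):ZMod p)^2 + (α:ZMod p)*((k:ℕ):ZMod p)) := by
      rw [hf]
      push_cast
      ring
    rw [hpush, hr0def] at hfk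
    exact hr0' _ (mul_left_cancel₀ (mul_ne_zero hu0 hx0) hfk)
  have hB0 : ∀ r : ZMod p, B r = 0 := by
    intro r
    rw [hBeq r r0, hB]
    simp only
    rw [hempty, Finset.sum_empty]
  -- contradiction with the induction hypothesis
  obtain ⟨k0, hk0⟩ := hE
  have hk0' : k0 ∈ E.filter (fun k => f k = f k0) := Finset.mem_filter.2 ⟨hk0, rfl⟩
  have hm'dvd : (m':ℤ) ∣ (m:ℤ) := Int.natCast_dvd_natCast.2 ⟨p, by rw [hmeq, mul_comm]⟩
  have hcopm' : IsCoprime (u * y) (m':ℤ) := by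
    refine IsCoprime.mul_left (hu.of_isCoprime_of_dvd_right hm'dvd) ?_
    exact ⟨(p:ℤ), x, by linear_combination hxy⟩
  have hne := IH m' hm'lt hm' hoddm' hsf' (u*y) hcopm' α
    (E.filter (fun k => f k = f k0)) ⟨k0, hk0'⟩
  apply hne
  have := hB0 (f k0)
  rw [hB] at this
  simpa only [mul_assoc] using this


theorem stmt18 (q : ℕ) (hq : 0 < q) (hodd : Odd q) (hsf : Squarefree q) (α : ℤ)
    (K : ℕ) (hK : K < q) :
    ∑ k ∈ Finset.range (K + 1), e ((((k : ℤ) ^ 2 + α * k : ℤ) : ℝ) / q) ≠ 0 := by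
  have h := key q hq hodd hsf 1 isCoprime_one_left α (Finset.range (K + 1))
    (Finset.nonempty_range_iff.2 (Nat.succ_ne_zero K))
  intro hS
  apply h
  rw [← hS]
  refine Finset.sum_congr rfl ?_
  intro k _
  norm_num
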